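/- arXiv:2008.07806 — 2 statements merged into one kernel-verified Lean document; each statement's English description precedes it below -/
import Mathlib

section
/- In the reduced free group K₃ on generators x₁, x₂, x₃, the basis commutators [[x₂,x₁],x₃] and [[x₃,x₁],x₂] are nontrivial, i.e., [[x₂,x₁],x₃] ≠ 1 and [[x₃,x₁],x₂] ≠ 1. -/
/-- The commutator `[x, y] = x⁻¹ y⁻¹ x y` used in the paper. -/
def pcomm {G : Type*} [Group G] (x y : G) : G := x⁻¹ * y⁻¹ * x * y

/-- The relators of the reduced free group: `[xᵢ, g⁻¹ xᵢ g]` for every generator `xᵢ`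
and every `g` in the free group. -/
def reducedRels (n : ℕ) : Set (FreeGroup (Fin n)) :=
  { x | ∃ (i : Fin n) (g : FreeGroup (Fin n)),
        x = pcomm (FreeGroup.of i) (g⁻¹ * FreeGroup.of i * g) }

/-- The reduced free group `K_n`, the quotient of the free group `F_n` by the normal
closure of the relators `[xᵢ, g⁻¹ xᵢ g]`. -/
abbrev K (n : ℕ) := FreeGroup (Fin n) ⧸ Subgroup.normalClosure (reducedRels n)

/-- The generator `x_{i+1}` of `K_n` (0-based index `i`). -/
def xg {n : ℕ} (i : Fin n) : K n := QuotientGroup.mk (FreeGroup.of i)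

/- ### Auxiliary: the unitriangular 4×4 matrices over 𝔽₂ -/

abbrev M4 := Matrix (Fin 4) (Fin 4) (ZMod 2)

def EE (p q : Fin 4) : M4 := Matrix.single p q 1

/-- Upper triangular predicate. -/
def Tri (X : M4) : Prop := ∀ i j : Fin 4, j < i → X i j = 0

instance (X : M4) : Decidable (Tri X) := by
  unfold Tri; exact @Fintype.decidableForallFintype _ _ (fun i => @Fintype.decidableForallFintype _ _ (fun j => inferInstance) _) _

lemma tri_mul {X Y : M4} (hX : Tri X) (hY : Tri Y) : Tri (X * Y) := by
  intro i j hij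
  rw [Matrix.mul_apply]
  apply Finset.sum_eq_zero
  intro k _
  rcases lt_or_ge j k with h | h
  · rw [hY k j h, mul_zero]
  · rw [hX i k (h.trans_lt hij), zero_mul]

/-- The subgroup of units whose value and inverse are upper triangular. -/
def H : Subgroup M4ˣ where
  carrier := {u | Tri (u : M4) ∧ Tri ((u⁻¹ : M4ˣ) : M4)}
  one_mem' := by constructor <;> decide +kernel
  mul_mem' := by
    rintro a b ⟨ha1, ha2⟩ ⟨hb1, hb2⟩
    refine ⟨?_, ?_⟩
    · rw [Units.val_mul]; exact tri_mul ha1 hb1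
    · rw [mul_inv_rev, Units.val_mul]; exact tri_mul hb2 ha2
  inv_mem' := by
    rintro a ⟨ha1, ha2⟩
    exact ⟨ha2, by rw [inv_inv]; exact ha1⟩

lemma sandwich {p q : Fin 4} (X : M4) (h : X q p = 0) :
    EE p q * X * EE p q = 0 := by
  unfold EE
  ext i j
  rw [Matrix.zero_apply]
  rcases eq_or_ne j q with rfl | hj
  · rw [Matrix.mul_single_apply_same]
    rcases eq_or_ne i p with rfl | hi
    · rw [Matrix.single_mul_apply_same, h]
      simp
    · rw [Matrix.single_mul_apply_of_ne _ _ _ _ _ hi]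
      simp
  · rw [Matrix.mul_single_apply_of_ne _ _ _ _ _ hj]

lemma conj_one {p q : Fin 4} (hpq : p < q) (e u : M4ˣ)
    (he : (e : M4) = 1 + EE p q) (hu : u ∈ H) :
    pcomm e (u⁻¹ * e * u) = 1 := by
  set y : M4ˣ := u⁻¹ * e * u with hy
  have hX : e * y = y * e := by
    apply Units.ext
    simp only [hy, Units.val_mul, he]
    set v : M4 := ((u⁻¹ : M4ˣ) : M4)
    set w : M4 := (u : M4)
    have hvw : v * w = 1 := u.inv_mul
    have h1 : EE p q * v * EE p q = 0 := sandwich v (hu.2 q p hpq)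
    have h2 : EE p q * w * EE p q = 0 := sandwich w (hu.1 q p hpq)
    have hx : v * (1 + EE p q) * w = 1 + v * EE p q * w := by
      rw [mul_add, mul_one, add_mul, hvw]
    rw [hx]
    have hz1 : EE p q * (v * EE p q * w) = 0 := by
      have : EE p q * (v * EE p q * w) = (EE p q * v * EE p q) * w := by
        noncomm_ring
      rw [this, h1, zero_mul]
    have hz2 : (v * EE p q * w) * EE p q = 0 := by
      have : (v * EE p q * w) * EE p q = v * (EE p q * w * EE p q) := by
        noncomm_ring
      rw [this, h2, mul_zero]
    generalize v * EE p q * w = T at hz1 hz2 ⊢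
    simp only [mul_add, add_mul, mul_one, one_mul, hz1, hz2, add_zero]
    abel
  have hre : pcomm e y = (y * e)⁻¹ * (e * y) := by
    rw [pcomm]; group
  rw [hre, hX, inv_mul_cancel]

/-- The three generators. -/
def ua : M4ˣ := ⟨1 + EE 0 1, 1 + EE 0 1, by decide +kernel, by decide +kernel⟩
def ub : M4ˣ := ⟨1 + EE 1 2, 1 + EE 1 2, by decide +kernel, by decide +kernel⟩
def uc : M4ˣ := ⟨1 + EE 2 3, 1 + EE 2 3, by decide +kernel, by decide +kernel⟩

lemma map_pcomm {G₁ G₂ : Type*} [Group G₁] [Group G₂] (f : G₁ →* G₂) (x y : G₁) :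
    f (pcomm x y) = pcomm (f x) (f y) := by
  simp [pcomm, map_mul, map_inv]

lemma relators_one (f : FreeGroup (Fin 3) →* M4ˣ)
    (hgen : ∀ i : Fin 3, ∃ p q : Fin 4, p < q ∧
      ((f (FreeGroup.of i) : M4) = 1 + EE p q) ∧ f (FreeGroup.of i) ∈ H) :
    ∀ x ∈ reducedRels 3, f x = 1 := by
  have hf : ∀ w, f w ∈ H := by
    intro w
    induction w using FreeGroup.induction_on with
    | C1 => rw [map_one]; exact one_mem H
    | of i => exact (hgen i).choose_spec.choose_spec.2.2
    | inv_of i h => rw [map_inv]; exact inv_mem h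
    | mul x y hx hy => rw [map_mul]; exact mul_mem hx hy
  rintro x ⟨i, g, rfl⟩
  obtain ⟨p, q, hpq, he, -⟩ := hgen i
  rw [map_pcomm]
  have : f (g⁻¹ * FreeGroup.of i * g) = (f g)⁻¹ * f (FreeGroup.of i) * f g := by
    rw [map_mul, map_mul, map_inv]
  rw [this]
  exact conj_one hpq _ (f g) he (hf g)

lemma hgen_of (f : FreeGroup (Fin 3) →* M4ˣ)
    (h : ∀ i : Fin 3, f (FreeGroup.of i) = ua ∨ f (FreeGroup.of i) = ub ∨
      f (FreeGroup.of i) = uc) :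
    ∀ i : Fin 3, ∃ p q : Fin 4, p < q ∧
      ((f (FreeGroup.of i) : M4) = 1 + EE p q) ∧ f (FreeGroup.of i) ∈ H := by
  intro i
  rcases h i with h' | h' | h'
  · exact ⟨0, 1, by decide, by rw [h']; rfl, by rw [h']; constructor <;> decide +kernel⟩
  · exact ⟨1, 2, by decide, by rw [h']; rfl, by rw [h']; constructor <;> decide +kernel⟩
  · exact ⟨2, 3, by decide, by rw [h']; rfl, by rw [h']; constructor <;> decide +kernel⟩

lemma key_ne : pcomm (pcomm ub ua) uc ≠ 1 := by
  intro h
  have h2 := congrArg Units.val h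
  rw [Units.val_one] at h2
  revert h2
  decide +kernel

/-- The basis commutators `[[x₂,x₁],x₃]` and `[[x₃,x₁],x₂]` are nontrivial in `K₃`. -/
theorem weight_three_commutators_nontrivial :
    pcomm (pcomm (xg 1) (xg 0)) (xg 2) ≠ (1 : K 3) ∧
    pcomm (pcomm (xg 2) (xg 0)) (xg 1) ≠ (1 : K 3) := by
  constructor
  · intro h
    set f : FreeGroup (Fin 3) →* M4ˣ := FreeGroup.lift ![ua, ub, uc] with hfdef
    have hgen := hgen_of f (by
      intro i
      fin_cases i <;> simp [hfdef, FreeGroup.lift_apply_of])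
    have hker : Subgroup.normalClosure (reducedRels 3) ≤ f.ker :=
      Subgroup.normalClosure_le_normal (fun x hx => relators_one f hgen x hx)
    set φ := QuotientGroup.lift _ f hker with hφ
    have h2 := congrArg φ h
    rw [map_one, map_pcomm, map_pcomm] at h2
    have hx0 : φ (xg 0) = ua := by
      rw [hφ, xg, QuotientGroup.lift_mk, hfdef]
      simp [FreeGroup.lift_apply_of]
    have hx1 : φ (xg 1) = ub := by
      rw [hφ, xg, QuotientGroup.lift_mk, hfdef]
      simp [FreeGroup.lift_apply_of]
    have hx2 : φ (xg 2) = uc := by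
      rw [hφ, xg, QuotientGroup.lift_mk, hfdef]
      simp [FreeGroup.lift_apply_of]
    rw [hx0, hx1, hx2] at h2
    exact key_ne h2
  · intro h
    set f : FreeGroup (Fin 3) →* M4ˣ := FreeGroup.lift ![ua, uc, ub] with hfdef
    have hgen := hgen_of f (by
      intro i
      fin_cases i <;> simp [hfdef, FreeGroup.lift_apply_of])
    have hker : Subgroup.normalClosure (reducedRels 3) ≤ f.ker :=
      Subgroup.normalClosure_le_normal (fun x hx => relators_one f hgen x hx)
    set φ := QuotientGroup.lift _ f hker with hφ
    have h2 := congrArg φ h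
    rw [map_one, map_pcomm, map_pcomm] at h2
    have hx0 : φ (xg 0) = ua := by
      rw [hφ, xg, QuotientGroup.lift_mk, hfdef]
      simp [FreeGroup.lift_apply_of]
    have hx1 : φ (xg 1) = uc := by
      rw [hφ, xg, QuotientGroup.lift_mk, hfdef]
      simp [FreeGroup.lift_apply_of]
    have hx2 : φ (xg 2) = ub := by
      rw [hφ, xg, QuotientGroup.lift_mk, hfdef]
      simp [FreeGroup.lift_apply_of]
    rw [hx0, hx1, hx2] at h2
    exact key_ne h2
end

section
/- In the homotopy braid group B̂₃, denoting by the same letters σ₁, σ₂ the images of the braid generators, b₁₂, b₁₃, b₂₃ the images of σ₁², σ₂σ₁²σ₂^{-1}, σ₂², and z = [b₂₃, b₁₃], the following conjugation formulas hold: σ₁^{-1}b₁₂σ₁ = b₁₂, σ₁ b₁₂ σ₁^{-1} = b₁₂, σ₁^{-1}b₁₃σ₁ = b₂₃z^{-1}, σ₁^{-1}b₂₃σ₁ = b₁₃, σ₁ b₁₃ σ₁^{-1} = b₂₃, σ₁ b₂₃ σ₁^{-1} = b₁₃ z^{-1}, and σ₁ z σ₁^{-1} = z^{-1}. -/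
/-- The braid relation `σ₁σ₂σ₁ = σ₂σ₁σ₂` on two generators. -/
def braidRel3 : Set (FreeGroup (Fin 2)) :=
  { FreeGroup.of 0 * FreeGroup.of 1 * FreeGroup.of 0 *
      (FreeGroup.of 1 * FreeGroup.of 0 * FreeGroup.of 1)⁻¹ }

/-- The braid group `B₃`. -/
abbrev B3 := PresentedGroup braidRel3

/-- The generator `σ₁` of `B₃`. -/
def s1 : B3 := PresentedGroup.of 0
/-- The generator `σ₂` of `B₃`. -/
def s2 : B3 := PresentedGroup.of 1
/-- `a₁₂ = σ₁²`. -/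
def a12 : B3 := s1 ^ 2
/-- `a₁₃ = σ₂σ₁²σ₂⁻¹`. -/
def a13 : B3 := s2 * s1 ^ 2 * s2⁻¹
/-- `a₂₃ = σ₂²`. -/
def a23 : B3 := s2 ^ 2

/-- The homotopy relations in `B₃`: `[a₁₃, g⁻¹a₁₃g]` and `[a₂₃, g⁻¹a₂₃g]` for `g`
in the subgroup generated by `a₁₃` and `a₂₃`. -/
def homotopyRels3 : Set B3 :=
  { x | ∃ g ∈ Subgroup.closure {a13, a23},
        x = pcomm a13 (g⁻¹ * a13 * g) ∨ x = pcomm a23 (g⁻¹ * a23 * g) }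

/-- The homotopy braid group `B̂₃`. -/
abbrev HB3 := B3 ⧸ Subgroup.normalClosure homotopyRels3

/-- The canonical projection `B₃ → B̂₃`. -/
def pr : B3 →* HB3 := QuotientGroup.mk' _

/-- The image of `σ₁` in `B̂₃`. -/
def t1 : HB3 := pr s1
/-- The image of `σ₂` in `B̂₃`. -/
def t2 : HB3 := pr s2
/-- The image `b₁₂` of `a₁₂` in `B̂₃`. -/
def b12 : HB3 := pr a12
/-- The image `b₁₃` of `a₁₃` in `B̂₃`. -/
def b13 : HB3 := pr a13
/-- The image `b₂₃` of `a₂₃` in `B̂₃`. -/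
def b23 : HB3 := pr a23
/-- `z = [b₂₃, b₁₃]`. -/
def zz : HB3 := pcomm b23 b13


set_option maxHeartbeats 1000000 in
lemma braid_key {G : Type*} [Group G] (u v q Z : G)
    (hq : q = v * u ^ 2 * v⁻¹)
    (hZ : Z = (v ^ 2)⁻¹ * q⁻¹ * v ^ 2 * q)
    (hb : u * v * u = v * u * v)
    (hA : q * ((v ^ 2)⁻¹ * q * v ^ 2) = ((v ^ 2)⁻¹ * q * v ^ 2) * q)
    (hB : v ^ 2 * (q⁻¹ * v ^ 2 * q) = (q⁻¹ * v ^ 2 * q) * v ^ 2) :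
    u⁻¹ * u ^ 2 * u = u ^ 2 ∧
    u * u ^ 2 * u⁻¹ = u ^ 2 ∧
    u⁻¹ * q * u = v ^ 2 * Z⁻¹ ∧
    u⁻¹ * v ^ 2 * u = q ∧
    u * q * u⁻¹ = v ^ 2 ∧
    u * v ^ 2 * u⁻¹ = q * Z⁻¹ ∧
    u * Z * u⁻¹ = Z⁻¹ := by
  subst hq hZ
  -- basic braid consequences
  have e5 : u * (v * u ^ 2 * v⁻¹) * u⁻¹ = v ^ 2 := by
    calc u * (v * u ^ 2 * v⁻¹) * u⁻¹
        = (u * v * u) * (u * v⁻¹ * u⁻¹) := by simp [pow_two, mul_assoc]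
      _ = (v * u * v) * (u * v⁻¹ * u⁻¹) := by rw [hb]
      _ = v * ((u * v * u) * (v⁻¹ * u⁻¹)) := by simp [pow_two, mul_assoc]
      _ = v * ((v * u * v) * (v⁻¹ * u⁻¹)) := by rw [hb]
      _ = v ^ 2 := by simp [pow_two, mul_assoc]
  have e4 : u⁻¹ * v ^ 2 * u = v * u ^ 2 * v⁻¹ := by
    calc u⁻¹ * v ^ 2 * u
        = u⁻¹ * (u * (v * u ^ 2 * v⁻¹) * u⁻¹) * u := by rw [e5]
      _ = v * u ^ 2 * v⁻¹ := by simp [pow_two, mul_assoc]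
  have ec : u ^ 2 * (v * u ^ 2 * v⁻¹) * v ^ 2 = (u * v * u) ^ 2 := by
    calc u ^ 2 * (v * u ^ 2 * v⁻¹) * v ^ 2
        = u * ((u * v * u) * (u * v)) := by simp [pow_two, mul_assoc]
      _ = u * ((v * u * v) * (u * v)) := by rw [hb]
      _ = (u * v * u) * (v * u * v) := by simp [pow_two, mul_assoc]
      _ = (u * v * u) * (u * v * u) := by rw [← hb]
      _ = (u * v * u) ^ 2 := by simp [pow_two, mul_assoc]
  have h1 : (u * v * u) * u = v * (u * v * u) := by
    conv_lhs => rw [hb]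
    simp [pow_two, mul_assoc]
  have h2 : (u * v * u) * v = u * (u * v * u) := by
    conv_rhs => rw [hb]
    simp [pow_two, mul_assoc]
  have hcu : (u * v * u) ^ 2 * u = u * (u * v * u) ^ 2 := by
    calc (u * v * u) ^ 2 * u = (u * v * u) * ((u * v * u) * u) := by simp [pow_two, mul_assoc]
      _ = (u * v * u) * (v * (u * v * u)) := by rw [h1]
      _ = ((u * v * u) * v) * (u * v * u) := by simp [pow_two, mul_assoc]
      _ = (u * (u * v * u)) * (u * v * u) := by rw [h2]
      _ = u * (u * v * u) ^ 2 := by simp [pow_two, mul_assoc]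
  have hcv : (u * v * u) ^ 2 * v = v * (u * v * u) ^ 2 := by
    calc (u * v * u) ^ 2 * v = (u * v * u) * ((u * v * u) * v) := by simp [pow_two, mul_assoc]
      _ = (u * v * u) * (u * (u * v * u)) := by rw [h2]
      _ = ((u * v * u) * u) * (u * v * u) := by simp [pow_two, mul_assoc]
      _ = (v * (u * v * u)) * (u * v * u) := by rw [h1]
      _ = v * (u * v * u) ^ 2 := by simp [pow_two, mul_assoc]
  have Cu : Commute ((u * v * u) ^ 2) u := hcu
  have Cv : Commute ((u * v * u) ^ 2) v := hcv
  have Cw : Commute ((u * v * u) ^ 2) ((v ^ 2)⁻¹ * (u ^ 2)⁻¹) :=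
    ((Cv.pow_right 2).inv_right).mul_right ((Cu.pow_right 2).inv_right)
  have Cr : Commute ((u * v * u) ^ 2) (v ^ 2) := Cv.pow_right 2
  have eq_i : u ^ 2 * (v * u ^ 2 * v⁻¹) * (u ^ 2)⁻¹
      = (v ^ 2)⁻¹ * (v * u ^ 2 * v⁻¹) * v ^ 2 := by
    calc u ^ 2 * (v * u ^ 2 * v⁻¹) * (u ^ 2)⁻¹
        = (u ^ 2 * (v * u ^ 2 * v⁻¹) * v ^ 2) * ((v ^ 2)⁻¹ * (u ^ 2)⁻¹) := by simp [pow_two, mul_assoc]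
      _ = (u * v * u) ^ 2 * ((v ^ 2)⁻¹ * (u ^ 2)⁻¹) := by rw [ec]
      _ = ((v ^ 2)⁻¹ * (u ^ 2)⁻¹) * (u * v * u) ^ 2 := Cw.eq
      _ = ((v ^ 2)⁻¹ * (u ^ 2)⁻¹) * (u ^ 2 * (v * u ^ 2 * v⁻¹) * v ^ 2) := by rw [ec]
      _ = (v ^ 2)⁻¹ * (v * u ^ 2 * v⁻¹) * v ^ 2 := by simp [pow_two, mul_assoc]
  have hmid : ((u * v * u) ^ 2)⁻¹ * v ^ 2 * (u * v * u) ^ 2 = v ^ 2 := by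
    calc ((u * v * u) ^ 2)⁻¹ * v ^ 2 * (u * v * u) ^ 2
        = ((u * v * u) ^ 2)⁻¹ * (v ^ 2 * (u * v * u) ^ 2) := by simp [pow_two, mul_assoc]
      _ = ((u * v * u) ^ 2)⁻¹ * ((u * v * u) ^ 2 * v ^ 2) := by rw [← Cr.eq]
      _ = v ^ 2 := by simp [pow_two, mul_assoc]
  have eq_ii : (u ^ 2)⁻¹ * v ^ 2 * u ^ 2
      = (v * u ^ 2 * v⁻¹) * v ^ 2 * (v * u ^ 2 * v⁻¹)⁻¹ := by
    calc (u ^ 2)⁻¹ * v ^ 2 * u ^ 2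
        = ((v * u ^ 2 * v⁻¹) * v ^ 2) *
            ((u ^ 2 * (v * u ^ 2 * v⁻¹) * v ^ 2)⁻¹ * v ^ 2 *
              (u ^ 2 * (v * u ^ 2 * v⁻¹) * v ^ 2)) *
            ((v ^ 2)⁻¹ * (v * u ^ 2 * v⁻¹)⁻¹) := by simp [pow_two, mul_assoc]
      _ = ((v * u ^ 2 * v⁻¹) * v ^ 2) *
            (((u * v * u) ^ 2)⁻¹ * v ^ 2 * (u * v * u) ^ 2) *
            ((v ^ 2)⁻¹ * (v * u ^ 2 * v⁻¹)⁻¹) := by rw [ec]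
      _ = ((v * u ^ 2 * v⁻¹) * v ^ 2) * (v ^ 2) *
            ((v ^ 2)⁻¹ * (v * u ^ 2 * v⁻¹)⁻¹) := by rw [hmid]
      _ = (v * u ^ 2 * v⁻¹) * v ^ 2 * (v * u ^ 2 * v⁻¹)⁻¹ := by simp [pow_two, mul_assoc]
  refine ⟨by simp [pow_two, mul_assoc], by simp [pow_two, mul_assoc], ?_, e4, e5, ?_, ?_⟩
  · -- eq3
    calc u⁻¹ * (v * u ^ 2 * v⁻¹) * u
        = u⁻¹ * (u⁻¹ * v ^ 2 * u) * u := by rw [e4]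
      _ = (u ^ 2)⁻¹ * v ^ 2 * u ^ 2 := by simp [pow_two, mul_assoc]
      _ = (v * u ^ 2 * v⁻¹) * v ^ 2 * (v * u ^ 2 * v⁻¹)⁻¹ := eq_ii
      _ = v ^ 2 * (v * u ^ 2 * v⁻¹)⁻¹ *
            ((v * u ^ 2 * v⁻¹) * ((v ^ 2)⁻¹ * (v * u ^ 2 * v⁻¹) * v ^ 2)) *
            (v * u ^ 2 * v⁻¹)⁻¹ := by simp [pow_two, mul_assoc]
      _ = v ^ 2 * (v * u ^ 2 * v⁻¹)⁻¹ *
            (((v ^ 2)⁻¹ * (v * u ^ 2 * v⁻¹) * v ^ 2) * (v * u ^ 2 * v⁻¹)) *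
            (v * u ^ 2 * v⁻¹)⁻¹ := by rw [hA]
      _ = v ^ 2 * ((v ^ 2)⁻¹ * (v * u ^ 2 * v⁻¹)⁻¹ * v ^ 2 * (v * u ^ 2 * v⁻¹))⁻¹ := by
            group
  · -- eq6
    calc u * v ^ 2 * u⁻¹
        = u * (u * (v * u ^ 2 * v⁻¹) * u⁻¹) * u⁻¹ := by rw [e5]
      _ = u ^ 2 * (v * u ^ 2 * v⁻¹) * (u ^ 2)⁻¹ := by simp [pow_two, mul_assoc]
      _ = (v ^ 2)⁻¹ * (v * u ^ 2 * v⁻¹) * v ^ 2 := eq_i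
      _ = (v * u ^ 2 * v⁻¹) *
            ((v ^ 2)⁻¹ * (v * u ^ 2 * v⁻¹)⁻¹ * v ^ 2 * (v * u ^ 2 * v⁻¹))⁻¹ := by simp [pow_two, mul_assoc]
  · -- eq7
    have eq6 : u * v ^ 2 * u⁻¹ = (v * u ^ 2 * v⁻¹) *
        ((v ^ 2)⁻¹ * (v * u ^ 2 * v⁻¹)⁻¹ * v ^ 2 * (v * u ^ 2 * v⁻¹))⁻¹ := by
      calc u * v ^ 2 * u⁻¹
          = u * (u * (v * u ^ 2 * v⁻¹) * u⁻¹) * u⁻¹ := by rw [e5]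
        _ = u ^ 2 * (v * u ^ 2 * v⁻¹) * (u ^ 2)⁻¹ := by simp [pow_two, mul_assoc]
        _ = (v ^ 2)⁻¹ * (v * u ^ 2 * v⁻¹) * v ^ 2 := eq_i
        _ = (v * u ^ 2 * v⁻¹) *
              ((v ^ 2)⁻¹ * (v * u ^ 2 * v⁻¹)⁻¹ * v ^ 2 * (v * u ^ 2 * v⁻¹))⁻¹ := by simp [pow_two, mul_assoc]
    have hB' : ((v * u ^ 2 * v⁻¹)⁻¹ * v ^ 2 * (v * u ^ 2 * v⁻¹))⁻¹ * v ^ 2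
        = v ^ 2 * ((v * u ^ 2 * v⁻¹)⁻¹ * v ^ 2 * (v * u ^ 2 * v⁻¹))⁻¹ := by
      calc ((v * u ^ 2 * v⁻¹)⁻¹ * v ^ 2 * (v * u ^ 2 * v⁻¹))⁻¹ * v ^ 2
          = ((v * u ^ 2 * v⁻¹)⁻¹ * v ^ 2 * (v * u ^ 2 * v⁻¹))⁻¹ *
              (v ^ 2 * ((v * u ^ 2 * v⁻¹)⁻¹ * v ^ 2 * (v * u ^ 2 * v⁻¹))) *
              ((v * u ^ 2 * v⁻¹)⁻¹ * v ^ 2 * (v * u ^ 2 * v⁻¹))⁻¹ := by simp [pow_two, mul_assoc]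
        _ = ((v * u ^ 2 * v⁻¹)⁻¹ * v ^ 2 * (v * u ^ 2 * v⁻¹))⁻¹ *
              (((v * u ^ 2 * v⁻¹)⁻¹ * v ^ 2 * (v * u ^ 2 * v⁻¹)) * v ^ 2) *
              ((v * u ^ 2 * v⁻¹)⁻¹ * v ^ 2 * (v * u ^ 2 * v⁻¹))⁻¹ := by rw [hB]
        _ = v ^ 2 * ((v * u ^ 2 * v⁻¹)⁻¹ * v ^ 2 * (v * u ^ 2 * v⁻¹))⁻¹ := by simp [pow_two, mul_assoc]
    calc u * ((v ^ 2)⁻¹ * (v * u ^ 2 * v⁻¹)⁻¹ * v ^ 2 * (v * u ^ 2 * v⁻¹)) * u⁻¹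
        = (u * v ^ 2 * u⁻¹)⁻¹ * (u * (v * u ^ 2 * v⁻¹) * u⁻¹)⁻¹ *
            (u * v ^ 2 * u⁻¹) * (u * (v * u ^ 2 * v⁻¹) * u⁻¹) := by simp [pow_two, mul_assoc]
      _ = ((v * u ^ 2 * v⁻¹) *
            ((v ^ 2)⁻¹ * (v * u ^ 2 * v⁻¹)⁻¹ * v ^ 2 * (v * u ^ 2 * v⁻¹))⁻¹)⁻¹ *
            (v ^ 2)⁻¹ *
            ((v * u ^ 2 * v⁻¹) *
            ((v ^ 2)⁻¹ * (v * u ^ 2 * v⁻¹)⁻¹ * v ^ 2 * (v * u ^ 2 * v⁻¹))⁻¹) *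
            v ^ 2 := by rw [e5, eq6]
      _ = (v ^ 2)⁻¹ *
            (((v * u ^ 2 * v⁻¹)⁻¹ * v ^ 2 * (v * u ^ 2 * v⁻¹))⁻¹ * v ^ 2) *
            v ^ 2 := by simp [pow_two, mul_assoc]
      _ = (v ^ 2)⁻¹ *
            (v ^ 2 * ((v * u ^ 2 * v⁻¹)⁻¹ * v ^ 2 * (v * u ^ 2 * v⁻¹))⁻¹) *
            v ^ 2 := by rw [hB']
      _ = ((v ^ 2)⁻¹ * (v * u ^ 2 * v⁻¹)⁻¹ * v ^ 2 * (v * u ^ 2 * v⁻¹))⁻¹ := by simp [pow_two, mul_assoc]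

lemma braid_B3 : s1 * s2 * s1 = s2 * s1 * s2 := by
  have h : (QuotientGroup.mk (FreeGroup.of 0 * FreeGroup.of 1 * FreeGroup.of 0 *
      (FreeGroup.of 1 * FreeGroup.of 0 * FreeGroup.of 1)⁻¹) : B3) = 1 := by
    apply (QuotientGroup.eq_one_iff _).mpr
    exact Subgroup.subset_normalClosure rfl
  have h2 : s1 * s2 * s1 * (s2 * s1 * s2)⁻¹ = 1 := h
  calc s1 * s2 * s1 = (s1 * s2 * s1 * (s2 * s1 * s2)⁻¹) * (s2 * s1 * s2) := by
        simp [mul_assoc]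
    _ = s2 * s1 * s2 := by rw [h2]; simp

lemma hA_rel : b13 * (b23⁻¹ * b13 * b23) = (b23⁻¹ * b13 * b23) * b13 := by
  have hmem : pcomm a13 (a23⁻¹ * a13 * a23) ∈ homotopyRels3 :=
    ⟨a23, Subgroup.subset_closure (by simp), Or.inl rfl⟩
  have h : pr (pcomm a13 (a23⁻¹ * a13 * a23)) = 1 :=
    (QuotientGroup.eq_one_iff _).mpr (Subgroup.subset_normalClosure hmem)
  simp only [pcomm, map_mul, map_inv] at h
  have h' : b13⁻¹ * (b23⁻¹ * b13 * b23)⁻¹ * b13 * (b23⁻¹ * b13 * b23) = 1 := by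
    simpa [b13, b23, mul_assoc] using h
  calc b13 * (b23⁻¹ * b13 * b23)
      = ((b23⁻¹ * b13 * b23) * b13) *
        (b13⁻¹ * (b23⁻¹ * b13 * b23)⁻¹ * b13 * (b23⁻¹ * b13 * b23)) := by
        simp [mul_assoc]
    _ = (b23⁻¹ * b13 * b23) * b13 := by rw [h', mul_one]

lemma hB_rel : b23 * (b13⁻¹ * b23 * b13) = (b13⁻¹ * b23 * b13) * b23 := by
  have hmem : pcomm a23 (a13⁻¹ * a23 * a13) ∈ homotopyRels3 :=
    ⟨a13, Subgroup.subset_closure (by simp), Or.inr rfl⟩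
  have h : pr (pcomm a23 (a13⁻¹ * a23 * a13)) = 1 :=
    (QuotientGroup.eq_one_iff _).mpr (Subgroup.subset_normalClosure hmem)
  simp only [pcomm, map_mul, map_inv] at h
  have h' : b23⁻¹ * (b13⁻¹ * b23 * b13)⁻¹ * b23 * (b13⁻¹ * b23 * b13) = 1 := by
    simpa [b13, b23, mul_assoc] using h
  calc b23 * (b13⁻¹ * b23 * b13)
      = ((b13⁻¹ * b23 * b13) * b23) *
        (b23⁻¹ * (b13⁻¹ * b23 * b13)⁻¹ * b23 * (b13⁻¹ * b23 * b13)) := by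
        simp [mul_assoc]
    _ = (b13⁻¹ * b23 * b13) * b23 := by rw [h', mul_one]

/-- Conjugation formulas by `σ₁` in `B̂₃`. -/

theorem sigma1_conjugation :
    t1⁻¹ * b12 * t1 = b12 ∧
    t1 * b12 * t1⁻¹ = b12 ∧
    t1⁻¹ * b13 * t1 = b23 * zz⁻¹ ∧
    t1⁻¹ * b23 * t1 = b13 ∧
    t1 * b13 * t1⁻¹ = b23 ∧
    t1 * b23 * t1⁻¹ = b13 * zz⁻¹ ∧
    t1 * zz * t1⁻¹ = zz⁻¹ := by
  have hb_t : t1 * t2 * t1 = t2 * t1 * t2 := by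
    have := congrArg pr braid_B3
    simpa only [map_mul, t1, t2] using this
  have hb12w : b12 = t1 ^ 2 := by
    show pr (s1 ^ 2) = t1 ^ 2
    rw [map_pow]; rfl
  have hb13w : b13 = t2 * t1 ^ 2 * t2⁻¹ := by
    show pr (s2 * s1 ^ 2 * s2⁻¹) = _
    rw [map_mul, map_mul, map_inv, map_pow]; rfl
  have hb23w : b23 = t2 ^ 2 := by
    show pr (s2 ^ 2) = t2 ^ 2
    rw [map_pow]; rfl
  have hzzw : zz = (t2 ^ 2)⁻¹ * b13⁻¹ * t2 ^ 2 * b13 := by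
    show b23⁻¹ * b13⁻¹ * b23 * b13 = _
    rw [hb23w]
  have hA' : b13 * ((t2 ^ 2)⁻¹ * b13 * t2 ^ 2) = ((t2 ^ 2)⁻¹ * b13 * t2 ^ 2) * b13 := by
    rw [← hb23w]; exact hA_rel
  have hB' : t2 ^ 2 * (b13⁻¹ * t2 ^ 2 * b13) = (b13⁻¹ * t2 ^ 2 * b13) * t2 ^ 2 := by
    rw [← hb23w]; exact hB_rel
  obtain ⟨c1, c2, c3, c4, c5, c6, c7⟩ :=
    braid_key t1 t2 b13 zz hb13w hzzw hb_t hA' hB'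
  refine ⟨?_, ?_, ?_, ?_, ?_, ?_, c7⟩
  · rw [hb12w]; exact c1
  · rw [hb12w]; exact c2
  · rw [hb23w]; exact c3
  · rw [hb23w]; exact c4
  · rw [hb23w]; exact c5
  · rw [hb23w]; exact c6
end
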